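/- With the setup of a monoidal category C with chosen duality data (x⁻, ε_x, η_x) for every object (satisfying the triangle identities), the functor inv : C ⥤ Cᵒᵖ (contravariant, tensor-reversing) carries a monoidal structure: there are natural isomorphisms χ_{x,y} : y⁻ ⊗ x⁻ ≅ (x ⊗ y)⁻ and ι : I ≅ I⁻ satisfying the associativity and unit coherence axioms of a monoidal functor C ⥤ (Cᵒᵖ)^rev. -/

import Mathlib

open CategoryTheory MonoidalCategory

variable {C : Type*} [Category C] [MonoidalCategory C]

/-- The contravariant action on morphisms induced by a choice of duals. -/
def dualMap (inv : C → C) (ε : ∀ x : C, x ⊗ inv x ≅ 𝟙_ C) (η : ∀ x : C, 𝟙_ C ≅ inv x ⊗ x)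
    {x y : C} (f : x ⟶ y) : inv y ⟶ inv x :=
  (λ_ (inv y)).inv ≫ ((η x).hom ▷ inv y) ≫ ((inv x ◁ f) ▷ inv y) ≫
    (α_ (inv x) y (inv y)).hom ≫ (inv x ◁ (ε y).hom) ≫ (ρ_ (inv x)).hom

/-- The tensorator `χ_{x,y} : (x ⊗ y)⁻ ⟶ y⁻ ⊗ x⁻` of the inverse functor, built from
`η_y`, `η_x` and `ε_{x ⊗ y}`. -/
def dualChi (inv : C → C) (ε : ∀ x : C, x ⊗ inv x ≅ 𝟙_ C) (η : ∀ x : C, 𝟙_ C ≅ inv x ⊗ x)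
    (x y : C) : inv (x ⊗ y) ⟶ inv y ⊗ inv x :=
  (λ_ (inv (x ⊗ y))).inv ≫ ((η y).hom ▷ inv (x ⊗ y)) ≫
    (α_ (inv y) y (inv (x ⊗ y))).hom ≫
    (inv y ◁ (((λ_ y).inv ≫ ((η x).hom ▷ y)) ▷ inv (x ⊗ y))) ≫
    (inv y ◁ ((α_ (inv x) x y).hom ▷ inv (x ⊗ y))) ≫
    (inv y ◁ (α_ (inv x) (x ⊗ y) (inv (x ⊗ y))).hom) ≫
    (inv y ◁ (inv x ◁ (ε (x ⊗ y)).hom)) ≫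
    (inv y ◁ (ρ_ (inv x)).hom)

/-- The unit comparison `ι : I⁻ ⟶ I`, given by `λ⁻¹` followed by `ε_I`. -/
def dualIota (inv : C → C) (ε : ∀ x : C, x ⊗ inv x ≅ 𝟙_ C) : inv (𝟙_ C) ⟶ 𝟙_ C :=
  (λ_ (inv (𝟙_ C))).inv ≫ (ε (𝟙_ C)).hom

namespace DualAux

variable (inv : C → C) (ε : ∀ x : C, x ⊗ inv x ≅ 𝟙_ C) (η : ∀ x : C, 𝟙_ C ≅ inv x ⊗ x)

/-- zig-zag with the bends on the right. -/
theorem zig {x : C}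
    (t : (ρ_ x).inv ≫ (x ◁ (η x).hom) ≫ (α_ x (inv x) x).inv ≫ ((ε x).hom ▷ x) ≫ (λ_ x).hom
        = 𝟙 x) :
    x ◁ (η x).hom ≫ (α_ x (inv x) x).inv ≫ (ε x).hom ▷ x = (ρ_ x).hom ≫ (λ_ x).inv := by
  have h := congrArg (fun f => (ρ_ x).hom ≫ f ≫ (λ_ x).inv) t
  simpa using h

/-- zig-zag with the bends on the left. -/
theorem zag {x : C}
    (t : (λ_ (inv x)).inv ≫ ((η x).hom ▷ inv x) ≫ (α_ (inv x) x (inv x)).hom ≫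
        (inv x ◁ (ε x).hom) ≫ (ρ_ (inv x)).hom = 𝟙 (inv x)) :
    (η x).hom ▷ inv x ≫ (α_ (inv x) x (inv x)).hom ≫ inv x ◁ (ε x).hom
      = (λ_ (inv x)).hom ≫ (ρ_ (inv x)).inv := by
  have h := congrArg (fun f => (λ_ (inv x)).hom ≫ f ≫ (ρ_ (inv x)).inv) t
  simpa using h

/-- Morphisms out of a (left-)dual object are determined by their "names". -/
theorem inj_general {A B Z : C} (cv : 𝟙_ C ⟶ A ⊗ B) (ev : B ⊗ A ⟶ 𝟙_ C)
    (zg : cv ▷ A ≫ (α_ A B A).hom ≫ A ◁ ev = (λ_ A).hom ≫ (ρ_ A).inv)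
    {u v : A ⟶ Z} (h : cv ≫ u ▷ B = cv ≫ v ▷ B) : u = v := by
  have key : ∀ w : A ⟶ Z,
      (λ_ A).inv ≫ (cv ≫ w ▷ B) ▷ A ≫ (α_ Z B A).hom ≫ Z ◁ ev ≫ (ρ_ Z).hom = w := by
    intro w
    calc (λ_ A).inv ≫ (cv ≫ w ▷ B) ▷ A ≫ (α_ Z B A).hom ≫ Z ◁ ev ≫ (ρ_ Z).hom
        = 𝟙 _ ⊗≫ cv ▷ A ⊗≫ (w ▷ (B ⊗ A) ≫ Z ◁ ev) ⊗≫ 𝟙 _ := by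
          monoidal
      _ = 𝟙 _ ⊗≫ (cv ▷ A ≫ (α_ A B A).hom ≫ A ◁ ev) ⊗≫ w ▷ 𝟙_ C ⊗≫ 𝟙 _ := by
          rw [← whisker_exchange]; monoidal
      _ = 𝟙 _ ⊗≫ ((λ_ A).hom ≫ (ρ_ A).inv) ⊗≫ w ▷ 𝟙_ C ⊗≫ 𝟙 _ := by rw [zg]
      _ = w := by monoidal
  rw [← key u, ← key v, h]

/-- The "name" of the dual of a morphism. -/
theorem mate {x y : C}
    (zigy : y ◁ (η y).hom ≫ (α_ y (inv y) y).inv ≫ (ε y).hom ▷ y = (ρ_ y).hom ≫ (λ_ y).inv)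
    (f : x ⟶ y) :
    (η y).hom ≫ dualMap inv ε η f ▷ y = (η x).hom ≫ inv x ◁ f := by
  calc (η y).hom ≫ dualMap inv ε η f ▷ y
      = 𝟙 _ ⊗≫ (𝟙_ C ◁ (η y).hom ≫ (η x).hom ▷ (inv y ⊗ y)) ⊗≫
          inv x ◁ (f ▷ (inv y ⊗ y)) ⊗≫ inv x ◁ ((ε y).hom ▷ y) ⊗≫ 𝟙 _ := by
        dsimp only [dualMap]; monoidal
    _ = 𝟙 _ ⊗≫ (η x).hom ▷ 𝟙_ C ⊗≫
          inv x ◁ (x ◁ (η y).hom ≫ f ▷ (inv y ⊗ y)) ⊗≫ inv x ◁ ((ε y).hom ▷ y) ⊗≫ 𝟙 _ := by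
        rw [whisker_exchange]; monoidal
    _ = 𝟙 _ ⊗≫ (η x).hom ▷ 𝟙_ C ⊗≫ inv x ◁ (f ▷ 𝟙_ C) ⊗≫
          inv x ◁ (y ◁ (η y).hom ≫ (α_ y (inv y) y).inv ≫ (ε y).hom ▷ y) ⊗≫ 𝟙 _ := by
        rw [whisker_exchange]; monoidal
    _ = 𝟙 _ ⊗≫ (η x).hom ▷ 𝟙_ C ⊗≫ inv x ◁ (f ▷ 𝟙_ C) ⊗≫
          inv x ◁ ((ρ_ y).hom ≫ (λ_ y).inv) ⊗≫ 𝟙 _ := by rw [zigy]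
    _ = (η x).hom ≫ inv x ◁ f := by monoidal

/-- The double coevaluation. -/
def dualN (x y : C) : 𝟙_ C ⟶ (inv y ⊗ inv x) ⊗ (x ⊗ y) :=
  (η y).hom ⊗≫ inv y ◁ ((η x).hom ▷ y) ⊗≫ 𝟙 ((inv y ⊗ inv x) ⊗ (x ⊗ y))

/-- The double evaluation. -/
def dualE (x y : C) : (x ⊗ y) ⊗ (inv y ⊗ inv x) ⟶ 𝟙_ C :=
  𝟙 ((x ⊗ y) ⊗ (inv y ⊗ inv x)) ⊗≫ x ◁ ((ε y).hom ▷ inv x) ⊗≫ (ε x).hom ⊗≫ 𝟙 (𝟙_ C)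

/-- The name of the tensorator is the double coevaluation. -/
theorem chi_name {x y : C}
    (zigxy : (x ⊗ y) ◁ (η (x ⊗ y)).hom ≫ (α_ (x ⊗ y) (inv (x ⊗ y)) (x ⊗ y)).inv ≫
        (ε (x ⊗ y)).hom ▷ (x ⊗ y) = (ρ_ (x ⊗ y)).hom ≫ (λ_ (x ⊗ y)).inv) :
    (η (x ⊗ y)).hom ≫ dualChi inv ε η x y ▷ (x ⊗ y) = dualN inv η x y := by
  calc (η (x ⊗ y)).hom ≫ dualChi inv ε η x y ▷ (x ⊗ y)
      = 𝟙 _ ⊗≫ (𝟙_ C ◁ (η (x ⊗ y)).hom ≫ (η y).hom ▷ (inv (x ⊗ y) ⊗ (x ⊗ y))) ⊗≫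
          (inv y ◁ ((λ_ y).inv ≫ (η x).hom ▷ y)) ▷ (inv (x ⊗ y) ⊗ (x ⊗ y)) ⊗≫
          (inv y ⊗ inv x) ◁ ((ε (x ⊗ y)).hom ▷ (x ⊗ y)) ⊗≫ 𝟙 _ := by
        dsimp only [dualChi]; monoidal
    _ = 𝟙 _ ⊗≫ (η y).hom ▷ 𝟙_ C ⊗≫
          ((inv y ⊗ y) ◁ (η (x ⊗ y)).hom ≫
            (inv y ◁ ((λ_ y).inv ≫ (η x).hom ▷ y)) ▷ (inv (x ⊗ y) ⊗ (x ⊗ y))) ⊗≫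
          (inv y ⊗ inv x) ◁ ((ε (x ⊗ y)).hom ▷ (x ⊗ y)) ⊗≫ 𝟙 _ := by
        rw [whisker_exchange]; monoidal
    _ = 𝟙 _ ⊗≫ (η y).hom ▷ 𝟙_ C ⊗≫
          (inv y ◁ ((λ_ y).inv ≫ (η x).hom ▷ y)) ▷ 𝟙_ C ⊗≫
          (inv y ⊗ inv x) ◁ ((x ⊗ y) ◁ (η (x ⊗ y)).hom ≫
            (α_ (x ⊗ y) (inv (x ⊗ y)) (x ⊗ y)).inv ≫ (ε (x ⊗ y)).hom ▷ (x ⊗ y)) ⊗≫ 𝟙 _ := by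
        rw [whisker_exchange]; monoidal
    _ = 𝟙 _ ⊗≫ (η y).hom ▷ 𝟙_ C ⊗≫
          (inv y ◁ ((λ_ y).inv ≫ (η x).hom ▷ y)) ▷ 𝟙_ C ⊗≫
          (inv y ⊗ inv x) ◁ ((ρ_ (x ⊗ y)).hom ≫ (λ_ (x ⊗ y)).inv) ⊗≫ 𝟙 _ := by
        rw [zigxy]
    _ = dualN inv η x y := by dsimp only [dualN]; monoidal

theorem iota_name
    (zig1 : 𝟙_ C ◁ (η (𝟙_ C)).hom ≫ (α_ (𝟙_ C) (inv (𝟙_ C)) (𝟙_ C)).inv ≫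
        (ε (𝟙_ C)).hom ▷ 𝟙_ C = (ρ_ (𝟙_ C)).hom ≫ (λ_ (𝟙_ C)).inv) :
    (η (𝟙_ C)).hom ≫ dualIota inv ε ▷ 𝟙_ C = (λ_ (𝟙_ C)).inv := by
  calc (η (𝟙_ C)).hom ≫ dualIota inv ε ▷ 𝟙_ C
      = 𝟙 _ ⊗≫ (𝟙_ C ◁ (η (𝟙_ C)).hom ≫ (α_ (𝟙_ C) (inv (𝟙_ C)) (𝟙_ C)).inv ≫
          (ε (𝟙_ C)).hom ▷ 𝟙_ C) ⊗≫ 𝟙 _ := by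
        dsimp only [dualIota]; monoidal
    _ = 𝟙 _ ⊗≫ ((ρ_ (𝟙_ C)).hom ≫ (λ_ (𝟙_ C)).inv) ⊗≫ 𝟙 _ := by rw [zig1]
    _ = (λ_ (𝟙_ C)).inv := by monoidal

/-- The double zag. -/
theorem zag₂ {x y : C}
    (zagx : (η x).hom ▷ inv x ≫ (α_ (inv x) x (inv x)).hom ≫ inv x ◁ (ε x).hom
      = (λ_ (inv x)).hom ≫ (ρ_ (inv x)).inv)
    (zagy : (η y).hom ▷ inv y ≫ (α_ (inv y) y (inv y)).hom ≫ inv y ◁ (ε y).hom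
      = (λ_ (inv y)).hom ≫ (ρ_ (inv y)).inv) :
    dualN inv η x y ▷ (inv y ⊗ inv x) ≫
        (α_ (inv y ⊗ inv x) (x ⊗ y) (inv y ⊗ inv x)).hom ≫
        (inv y ⊗ inv x) ◁ dualE inv ε x y
      = (λ_ (inv y ⊗ inv x)).hom ≫ (ρ_ (inv y ⊗ inv x)).inv := by
  calc dualN inv η x y ▷ (inv y ⊗ inv x) ≫
        (α_ (inv y ⊗ inv x) (x ⊗ y) (inv y ⊗ inv x)).hom ≫
        (inv y ⊗ inv x) ◁ dualE inv ε x y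
      = 𝟙 _ ⊗≫ (η y).hom ▷ (inv y ⊗ inv x) ⊗≫
          inv y ◁ ((η x).hom ▷ ((y ⊗ inv y) ⊗ inv x) ≫
            (inv x ⊗ x) ◁ ((ε y).hom ▷ inv x)) ⊗≫
          inv y ◁ (inv x ◁ ((ε x).hom)) ⊗≫ 𝟙 _ := by
        dsimp only [dualN, dualE]; monoidal
    _ = 𝟙 _ ⊗≫ (η y).hom ▷ (inv y ⊗ inv x) ⊗≫
          inv y ◁ (𝟙_ C ◁ ((ε y).hom ▷ inv x) ≫ (η x).hom ▷ (𝟙_ C ⊗ inv x)) ⊗≫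
          inv y ◁ (inv x ◁ ((ε x).hom)) ⊗≫ 𝟙 _ := by
        rw [← whisker_exchange]
    _ = 𝟙 _ ⊗≫ ((η y).hom ▷ inv y ≫ (α_ (inv y) y (inv y)).hom ≫ inv y ◁ (ε y).hom) ▷ inv x ⊗≫
          inv y ◁ ((η x).hom ▷ inv x ≫ (α_ (inv x) x (inv x)).hom ≫ inv x ◁ (ε x).hom) ⊗≫
          𝟙 _ := by monoidal
    _ = 𝟙 _ ⊗≫ ((λ_ (inv y)).hom ≫ (ρ_ (inv y)).inv) ▷ inv x ⊗≫
          inv y ◁ ((λ_ (inv x)).hom ≫ (ρ_ (inv x)).inv) ⊗≫ 𝟙 _ := by rw [zagx, zagy]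
    _ = (λ_ (inv y ⊗ inv x)).hom ≫ (ρ_ (inv y ⊗ inv x)).inv := by monoidal

/-- The double zig. -/
theorem zig₂ {x y : C}
    (zigx : x ◁ (η x).hom ≫ (α_ x (inv x) x).inv ≫ (ε x).hom ▷ x = (ρ_ x).hom ≫ (λ_ x).inv)
    (zigy : y ◁ (η y).hom ≫ (α_ y (inv y) y).inv ≫ (ε y).hom ▷ y = (ρ_ y).hom ≫ (λ_ y).inv) :
    (x ⊗ y) ◁ dualN inv η x y ≫ (α_ (x ⊗ y) (inv y ⊗ inv x) (x ⊗ y)).inv ≫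
        dualE inv ε x y ▷ (x ⊗ y)
      = (ρ_ (x ⊗ y)).hom ≫ (λ_ (x ⊗ y)).inv := by
  calc (x ⊗ y) ◁ dualN inv η x y ≫ (α_ (x ⊗ y) (inv y ⊗ inv x) (x ⊗ y)).inv ≫
        dualE inv ε x y ▷ (x ⊗ y)
      = 𝟙 _ ⊗≫ ((x ⊗ y : C) ◁ (η y).hom) ⊗≫
          x ◁ ((y ⊗ inv y) ◁ ((η x).hom ▷ y) ≫ (ε y).hom ▷ ((inv x ⊗ x) ⊗ y)) ⊗≫
          (ε x).hom ▷ (x ⊗ y) ⊗≫ 𝟙 _ := by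
        dsimp only [dualN, dualE]; monoidal
    _ = 𝟙 _ ⊗≫ ((x ⊗ y : C) ◁ (η y).hom) ⊗≫
          x ◁ ((ε y).hom ▷ (𝟙_ C ⊗ y) ≫ 𝟙_ C ◁ ((η x).hom ▷ y)) ⊗≫
          (ε x).hom ▷ (x ⊗ y) ⊗≫ 𝟙 _ := by
        rw [whisker_exchange]
    _ = 𝟙 _ ⊗≫ x ◁ (y ◁ (η y).hom ≫ (α_ y (inv y) y).inv ≫ (ε y).hom ▷ y) ⊗≫
          (x ◁ (η x).hom ≫ (α_ x (inv x) x).inv ≫ (ε x).hom ▷ x) ▷ y ⊗≫ 𝟙 _ := by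
        monoidal
    _ = 𝟙 _ ⊗≫ x ◁ ((ρ_ y).hom ≫ (λ_ y).inv) ⊗≫
          ((ρ_ x).hom ≫ (λ_ x).inv) ▷ y ⊗≫ 𝟙 _ := by rw [zigx, zigy]
    _ = (ρ_ (x ⊗ y)).hom ≫ (λ_ (x ⊗ y)).inv := by monoidal

/-- The candidate inverse of the tensorator. -/
def dualPsi (x y : C) : inv y ⊗ inv x ⟶ inv (x ⊗ y) :=
  (λ_ (inv y ⊗ inv x)).inv ≫ (η (x ⊗ y)).hom ▷ (inv y ⊗ inv x) ≫
    (α_ (inv (x ⊗ y)) (x ⊗ y) (inv y ⊗ inv x)).hom ≫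
    inv (x ⊗ y) ◁ dualE inv ε x y ≫ (ρ_ (inv (x ⊗ y))).hom

theorem psi_name {x y : C}
    (zg₂ : (x ⊗ y) ◁ dualN inv η x y ≫ (α_ (x ⊗ y) (inv y ⊗ inv x) (x ⊗ y)).inv ≫
        dualE inv ε x y ▷ (x ⊗ y) = (ρ_ (x ⊗ y)).hom ≫ (λ_ (x ⊗ y)).inv) :
    dualN inv η x y ≫ dualPsi inv ε η x y ▷ (x ⊗ y) = (η (x ⊗ y)).hom := by
  calc dualN inv η x y ≫ dualPsi inv ε η x y ▷ (x ⊗ y)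
      = 𝟙 _ ⊗≫ (𝟙_ C ◁ dualN inv η x y ≫
          (η (x ⊗ y)).hom ▷ ((inv y ⊗ inv x) ⊗ (x ⊗ y))) ⊗≫
          inv (x ⊗ y) ◁ (dualE inv ε x y ▷ (x ⊗ y)) ⊗≫ 𝟙 _ := by
        dsimp only [dualPsi]; monoidal
    _ = 𝟙 _ ⊗≫ (η (x ⊗ y)).hom ▷ 𝟙_ C ⊗≫
          inv (x ⊗ y) ◁ ((x ⊗ y) ◁ dualN inv η x y ≫
            (α_ (x ⊗ y) (inv y ⊗ inv x) (x ⊗ y)).inv ≫ dualE inv ε x y ▷ (x ⊗ y)) ⊗≫ 𝟙 _ := by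
        rw [whisker_exchange]; monoidal
    _ = 𝟙 _ ⊗≫ (η (x ⊗ y)).hom ▷ 𝟙_ C ⊗≫
          inv (x ⊗ y) ◁ ((ρ_ (x ⊗ y)).hom ≫ (λ_ (x ⊗ y)).inv) ⊗≫ 𝟙 _ := by rw [zg₂]
    _ = (η (x ⊗ y)).hom := by monoidal

theorem nat_key {x x' y y' : C} (f : x ⟶ x') (g : y ⟶ y')
    (mf : (η x').hom ≫ dualMap inv ε η f ▷ x' = (η x).hom ≫ inv x ◁ f)
    (mg : (η y').hom ≫ dualMap inv ε η g ▷ y' = (η y).hom ≫ inv y ◁ g) :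
    dualN inv η x' y' ≫ (dualMap inv ε η g ⊗ₘ dualMap inv ε η f) ▷ (x' ⊗ y')
      = dualN inv η x y ≫ (inv y ⊗ inv x) ◁ (f ⊗ₘ g) := by
  calc dualN inv η x' y' ≫ (dualMap inv ε η g ⊗ₘ dualMap inv ε η f) ▷ (x' ⊗ y')
      = 𝟙 _ ⊗≫ (η y').hom ⊗≫
          (inv y' ◁ ((η x').hom ▷ y') ≫ dualMap inv ε η g ▷ ((inv x' ⊗ x') ⊗ y')) ⊗≫
          (inv y ◁ dualMap inv ε η f) ▷ (x' ⊗ y') ⊗≫ 𝟙 _ := by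
        dsimp only [dualN]; rw [MonoidalCategory.tensorHom_def]; monoidal
    _ = 𝟙 _ ⊗≫ ((η y').hom ≫ dualMap inv ε η g ▷ y') ⊗≫
          inv y ◁ (((η x').hom ≫ dualMap inv ε η f ▷ x') ▷ y') ⊗≫ 𝟙 _ := by
        rw [whisker_exchange]; monoidal
    _ = 𝟙 _ ⊗≫ ((η y).hom ≫ inv y ◁ g) ⊗≫
          inv y ◁ (((η x).hom ≫ inv x ◁ f) ▷ y') ⊗≫ 𝟙 _ := by rw [mf, mg]
    _ = 𝟙 _ ⊗≫ (η y).hom ⊗≫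
          inv y ◁ (𝟙_ C ◁ g ≫ ((η x).hom ≫ inv x ◁ f) ▷ y') ⊗≫ 𝟙 _ := by monoidal
    _ = 𝟙 _ ⊗≫ (η y).hom ⊗≫
          inv y ◁ (((η x).hom ≫ inv x ◁ f) ▷ y ≫ (inv x ⊗ x') ◁ g) ⊗≫ 𝟙 _ := by
        rw [whisker_exchange]
    _ = dualN inv η x y ≫ (inv y ⊗ inv x) ◁ (f ⊗ₘ g) := by
        dsimp only [dualN]; rw [MonoidalCategory.tensorHom_def]; monoidal

end DualAux

set_option maxHeartbeats 4000000 in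
/-- Given coherent duality data on a monoidal category `C` (inverses `x⁻` with `ε_x`, `η_x`
satisfying both triangle identities), the contravariant, tensor-reversing functor `inv`
carries a monoidal structure: the comparison maps `χ_{x,y} : (x ⊗ y)⁻ ⟶ y⁻ ⊗ x⁻` and
`ι : I⁻ ⟶ I` are isomorphisms, are natural, and satisfy the associativity and unit coherence
axioms of a monoidal functor `C ⥤ (Cᵒᵖ)^rev`. -/
theorem dual_functor_monoidal
    (inv : C → C) (ε : ∀ x : C, x ⊗ inv x ≅ 𝟙_ C) (η : ∀ x : C, 𝟙_ C ≅ inv x ⊗ x)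
    (triangle₁ : ∀ x : C,
      (ρ_ x).inv ≫ (x ◁ (η x).hom) ≫ (α_ x (inv x) x).inv ≫ ((ε x).hom ▷ x) ≫ (λ_ x).hom
        = 𝟙 x)
    (triangle₂ : ∀ x : C,
      (λ_ (inv x)).inv ≫ ((η x).hom ▷ inv x) ≫ (α_ (inv x) x (inv x)).hom ≫
        (inv x ◁ (ε x).hom) ≫ (ρ_ (inv x)).hom = 𝟙 (inv x)) :
    (∀ x y : C, IsIso (dualChi inv ε η x y)) ∧
    IsIso (dualIota inv ε) ∧
    (∀ {x x' y y' : C} (f : x ⟶ x') (g : y ⟶ y'),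
      dualMap inv ε η (f ⊗ₘ g) ≫ dualChi inv ε η x y =
        dualChi inv ε η x' y' ≫ (dualMap inv ε η g ⊗ₘ dualMap inv ε η f)) ∧
    (∀ x y z : C,
      dualMap inv ε η (α_ x y z).hom ≫ dualChi inv ε η (x ⊗ y) z ≫
          (inv z ◁ dualChi inv ε η x y) ≫ (α_ (inv z) (inv y) (inv x)).inv =
        dualChi inv ε η x (y ⊗ z) ≫ (dualChi inv ε η y z ▷ inv x)) ∧
    (∀ x : C,
      dualMap inv ε η (λ_ x).hom ≫ dualChi inv ε η (𝟙_ C) x ≫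
          (inv x ◁ dualIota inv ε) ≫ (ρ_ (inv x)).hom = 𝟙 (inv x)) ∧
    (∀ x : C,
      dualMap inv ε η (ρ_ x).hom ≫ dualChi inv ε η x (𝟙_ C) ≫
          (dualIota inv ε ▷ inv x) ≫ (λ_ (inv x)).hom = 𝟙 (inv x)) := by
  have zig : ∀ x : C,
      x ◁ (η x).hom ≫ (α_ x (inv x) x).inv ≫ (ε x).hom ▷ x = (ρ_ x).hom ≫ (λ_ x).inv :=
    fun x => DualAux.zig inv ε η (triangle₁ x)
  have zag : ∀ x : C,
      (η x).hom ▷ inv x ≫ (α_ (inv x) x (inv x)).hom ≫ inv x ◁ (ε x).hom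
        = (λ_ (inv x)).hom ≫ (ρ_ (inv x)).inv :=
    fun x => DualAux.zag inv ε η (triangle₂ x)
  have mate : ∀ {x y : C} (f : x ⟶ y),
      (η y).hom ≫ dualMap inv ε η f ▷ y = (η x).hom ≫ inv x ◁ f :=
    fun {x y} f => DualAux.mate inv ε η (zig y) f
  have chi_name : ∀ x y : C,
      (η (x ⊗ y)).hom ≫ dualChi inv ε η x y ▷ (x ⊗ y) = DualAux.dualN inv η x y :=
    fun x y => DualAux.chi_name inv ε η (zig (x ⊗ y))
  have iota_name : (η (𝟙_ C)).hom ≫ dualIota inv ε ▷ 𝟙_ C = (λ_ (𝟙_ C)).inv :=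
    DualAux.iota_name inv ε η (zig (𝟙_ C))
  have zag₂ : ∀ x y : C,
      DualAux.dualN inv η x y ▷ (inv y ⊗ inv x) ≫
          (α_ (inv y ⊗ inv x) (x ⊗ y) (inv y ⊗ inv x)).hom ≫
          (inv y ⊗ inv x) ◁ DualAux.dualE inv ε x y
        = (λ_ (inv y ⊗ inv x)).hom ≫ (ρ_ (inv y ⊗ inv x)).inv :=
    fun x y => DualAux.zag₂ inv ε η (zag x) (zag y)
  have zig₂ : ∀ x y : C,
      (x ⊗ y) ◁ DualAux.dualN inv η x y ≫ (α_ (x ⊗ y) (inv y ⊗ inv x) (x ⊗ y)).inv ≫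
          DualAux.dualE inv ε x y ▷ (x ⊗ y)
        = (ρ_ (x ⊗ y)).hom ≫ (λ_ (x ⊗ y)).inv :=
    fun x y => DualAux.zig₂ inv ε η (zig x) (zig y)
  have psi_name : ∀ x y : C,
      DualAux.dualN inv η x y ≫ DualAux.dualPsi inv ε η x y ▷ (x ⊗ y) = (η (x ⊗ y)).hom :=
    fun x y => DualAux.psi_name inv ε η (zig₂ x y)
  refine ⟨?_, ?_, ?_, ?_, ?_, ?_⟩
  · -- χ is an isomorphism
    intro x y
    refine ⟨DualAux.dualPsi inv ε η x y, ?_, ?_⟩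
    · refine DualAux.inj_general (η (x ⊗ y)).hom (ε (x ⊗ y)).hom (zag (x ⊗ y)) ?_
      rw [comp_whiskerRight, ← Category.assoc, chi_name, psi_name]
      simp
    · refine DualAux.inj_general (DualAux.dualN inv η x y) (DualAux.dualE inv ε x y)
        (zag₂ x y) ?_
      rw [comp_whiskerRight, ← Category.assoc, psi_name, chi_name]
      simp
  · -- ι is an isomorphism
    show IsIso ((λ_ (inv (𝟙_ C))).inv ≫ (ε (𝟙_ C)).hom)
    infer_instance
  · -- naturality
    intro x x' y y' f g
    refine DualAux.inj_general (η (x' ⊗ y')).hom (ε (x' ⊗ y')).hom (zag (x' ⊗ y')) ?_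
    calc (η (x' ⊗ y')).hom ≫ (dualMap inv ε η (f ⊗ₘ g) ≫ dualChi inv ε η x y) ▷ (x' ⊗ y')
        = ((η (x' ⊗ y')).hom ≫ dualMap inv ε η (f ⊗ₘ g) ▷ (x' ⊗ y')) ≫
            dualChi inv ε η x y ▷ (x' ⊗ y') := by simp
      _ = (η (x ⊗ y)).hom ≫ inv (x ⊗ y) ◁ (f ⊗ₘ g) ≫ dualChi inv ε η x y ▷ (x' ⊗ y') := by
          rw [mate]; simp
      _ = (η (x ⊗ y)).hom ≫ dualChi inv ε η x y ▷ (x ⊗ y) ≫ (inv y ⊗ inv x) ◁ (f ⊗ₘ g) := by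
          rw [whisker_exchange]
      _ = DualAux.dualN inv η x y ≫ (inv y ⊗ inv x) ◁ (f ⊗ₘ g) := by
          rw [← Category.assoc, chi_name]
      _ = DualAux.dualN inv η x' y' ≫
            (dualMap inv ε η g ⊗ₘ dualMap inv ε η f) ▷ (x' ⊗ y') :=
          (DualAux.nat_key inv ε η f g (mate f) (mate g)).symm
      _ = (η (x' ⊗ y')).hom ≫
            (dualChi inv ε η x' y' ≫ (dualMap inv ε η g ⊗ₘ dualMap inv ε η f)) ▷ (x' ⊗ y') := by
          rw [comp_whiskerRight, ← Category.assoc, chi_name]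
  · -- associativity
    intro x y z
    refine DualAux.inj_general (η (x ⊗ (y ⊗ z))).hom (ε (x ⊗ (y ⊗ z))).hom
      (zag (x ⊗ (y ⊗ z))) ?_
    have lhs : (η (x ⊗ (y ⊗ z))).hom ≫
        (dualMap inv ε η (α_ x y z).hom ≫ dualChi inv ε η (x ⊗ y) z ≫
          (inv z ◁ dualChi inv ε η x y) ≫ (α_ (inv z) (inv y) (inv x)).inv) ▷ (x ⊗ (y ⊗ z))
        = 𝟙 _ ⊗≫ (η z).hom ⊗≫ inv z ◁ ((η y).hom ▷ z) ⊗≫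
            (inv z ⊗ inv y) ◁ ((η x).hom ▷ (y ⊗ z)) ⊗≫
            𝟙 (((inv z ⊗ inv y) ⊗ inv x) ⊗ (x ⊗ (y ⊗ z))) := by
      calc (η (x ⊗ (y ⊗ z))).hom ≫
          (dualMap inv ε η (α_ x y z).hom ≫ dualChi inv ε η (x ⊗ y) z ≫
            (inv z ◁ dualChi inv ε η x y) ≫ (α_ (inv z) (inv y) (inv x)).inv) ▷ (x ⊗ (y ⊗ z))
          = ((η (x ⊗ (y ⊗ z))).hom ≫ dualMap inv ε η (α_ x y z).hom ▷ (x ⊗ (y ⊗ z))) ≫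
              (dualChi inv ε η (x ⊗ y) z ≫ (inv z ◁ dualChi inv ε η x y) ≫
                (α_ (inv z) (inv y) (inv x)).inv) ▷ (x ⊗ (y ⊗ z)) := by simp
        _ = (η ((x ⊗ y) ⊗ z)).hom ≫ inv ((x ⊗ y) ⊗ z) ◁ (α_ x y z).hom ≫
              (dualChi inv ε η (x ⊗ y) z ≫ (inv z ◁ dualChi inv ε η x y) ≫
                (α_ (inv z) (inv y) (inv x)).inv) ▷ (x ⊗ (y ⊗ z)) := by rw [mate]; simp
        _ = (η ((x ⊗ y) ⊗ z)).hom ≫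
              (dualChi inv ε η (x ⊗ y) z ≫ (inv z ◁ dualChi inv ε η x y) ≫
                (α_ (inv z) (inv y) (inv x)).inv) ▷ ((x ⊗ y) ⊗ z) ≫
              ((inv z ⊗ inv y) ⊗ inv x) ◁ (α_ x y z).hom := by rw [whisker_exchange]
        _ = ((η ((x ⊗ y) ⊗ z)).hom ≫ dualChi inv ε η (x ⊗ y) z ▷ ((x ⊗ y) ⊗ z)) ≫
              ((inv z ◁ dualChi inv ε η x y) ≫ (α_ (inv z) (inv y) (inv x)).inv) ▷
                ((x ⊗ y) ⊗ z) ≫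
              ((inv z ⊗ inv y) ⊗ inv x) ◁ (α_ x y z).hom := by
            simp only [comp_whiskerRight, Category.assoc]
        _ = DualAux.dualN inv η (x ⊗ y) z ≫
              ((inv z ◁ dualChi inv ε η x y) ≫ (α_ (inv z) (inv y) (inv x)).inv) ▷
                ((x ⊗ y) ⊗ z) ≫
              ((inv z ⊗ inv y) ⊗ inv x) ◁ (α_ x y z).hom := by rw [chi_name]
        _ = 𝟙 _ ⊗≫ (η z).hom ⊗≫
              inv z ◁ (((η (x ⊗ y)).hom ≫ dualChi inv ε η x y ▷ (x ⊗ y)) ▷ z) ⊗≫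
              𝟙 (((inv z ⊗ inv y) ⊗ inv x) ⊗ (x ⊗ (y ⊗ z))) := by
            dsimp only [DualAux.dualN]; monoidal
        _ = 𝟙 _ ⊗≫ (η z).hom ⊗≫ inv z ◁ (DualAux.dualN inv η x y ▷ z) ⊗≫
              𝟙 (((inv z ⊗ inv y) ⊗ inv x) ⊗ (x ⊗ (y ⊗ z))) := by rw [chi_name]
        _ = 𝟙 _ ⊗≫ (η z).hom ⊗≫ inv z ◁ ((η y).hom ▷ z) ⊗≫
              (inv z ⊗ inv y) ◁ ((η x).hom ▷ (y ⊗ z)) ⊗≫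
              𝟙 (((inv z ⊗ inv y) ⊗ inv x) ⊗ (x ⊗ (y ⊗ z))) := by
            dsimp only [DualAux.dualN]; monoidal
    have rhs : (η (x ⊗ (y ⊗ z))).hom ≫
        (dualChi inv ε η x (y ⊗ z) ≫ (dualChi inv ε η y z ▷ inv x)) ▷ (x ⊗ (y ⊗ z))
        = 𝟙 _ ⊗≫ (η z).hom ⊗≫ inv z ◁ ((η y).hom ▷ z) ⊗≫
            (inv z ⊗ inv y) ◁ ((η x).hom ▷ (y ⊗ z)) ⊗≫
            𝟙 (((inv z ⊗ inv y) ⊗ inv x) ⊗ (x ⊗ (y ⊗ z))) := by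
      calc (η (x ⊗ (y ⊗ z))).hom ≫
          (dualChi inv ε η x (y ⊗ z) ≫ (dualChi inv ε η y z ▷ inv x)) ▷ (x ⊗ (y ⊗ z))
          = ((η (x ⊗ (y ⊗ z))).hom ≫ dualChi inv ε η x (y ⊗ z) ▷ (x ⊗ (y ⊗ z))) ≫
              (dualChi inv ε η y z ▷ inv x) ▷ (x ⊗ (y ⊗ z)) := by simp
        _ = DualAux.dualN inv η x (y ⊗ z) ≫
              (dualChi inv ε η y z ▷ inv x) ▷ (x ⊗ (y ⊗ z)) := by rw [chi_name]
        _ = 𝟙 _ ⊗≫ (η (y ⊗ z)).hom ⊗≫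
              (inv (y ⊗ z) ◁ ((η x).hom ▷ (y ⊗ z)) ≫
                dualChi inv ε η y z ▷ ((inv x ⊗ x) ⊗ (y ⊗ z))) ⊗≫
              𝟙 (((inv z ⊗ inv y) ⊗ inv x) ⊗ (x ⊗ (y ⊗ z))) := by
            dsimp only [DualAux.dualN]; monoidal
        _ = 𝟙 _ ⊗≫ (η (y ⊗ z)).hom ⊗≫
              (dualChi inv ε η y z ▷ (𝟙_ C ⊗ (y ⊗ z)) ≫
                (inv z ⊗ inv y) ◁ ((η x).hom ▷ (y ⊗ z))) ⊗≫
              𝟙 (((inv z ⊗ inv y) ⊗ inv x) ⊗ (x ⊗ (y ⊗ z))) := by rw [whisker_exchange]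
        _ = 𝟙 _ ⊗≫ ((η (y ⊗ z)).hom ≫ dualChi inv ε η y z ▷ (y ⊗ z)) ⊗≫
              (inv z ⊗ inv y) ◁ ((η x).hom ▷ (y ⊗ z)) ⊗≫
              𝟙 (((inv z ⊗ inv y) ⊗ inv x) ⊗ (x ⊗ (y ⊗ z))) := by monoidal
        _ = 𝟙 _ ⊗≫ DualAux.dualN inv η y z ⊗≫
              (inv z ⊗ inv y) ◁ ((η x).hom ▷ (y ⊗ z)) ⊗≫
              𝟙 (((inv z ⊗ inv y) ⊗ inv x) ⊗ (x ⊗ (y ⊗ z))) := by rw [chi_name]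
        _ = 𝟙 _ ⊗≫ (η z).hom ⊗≫ inv z ◁ ((η y).hom ▷ z) ⊗≫
              (inv z ⊗ inv y) ◁ ((η x).hom ▷ (y ⊗ z)) ⊗≫
              𝟙 (((inv z ⊗ inv y) ⊗ inv x) ⊗ (x ⊗ (y ⊗ z))) := by
            dsimp only [DualAux.dualN]; monoidal
    rw [lhs, rhs]
  · -- left unit axiom
    intro x
    refine DualAux.inj_general (η x).hom (ε x).hom (zag x) ?_
    have : (η x).hom ≫
        (dualMap inv ε η (λ_ x).hom ≫ dualChi inv ε η (𝟙_ C) x ≫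
          (inv x ◁ dualIota inv ε) ≫ (ρ_ (inv x)).hom) ▷ x = (η x).hom := by
      calc (η x).hom ≫
          (dualMap inv ε η (λ_ x).hom ≫ dualChi inv ε η (𝟙_ C) x ≫
            (inv x ◁ dualIota inv ε) ≫ (ρ_ (inv x)).hom) ▷ x
          = ((η x).hom ≫ dualMap inv ε η (λ_ x).hom ▷ x) ≫
              (dualChi inv ε η (𝟙_ C) x ≫ (inv x ◁ dualIota inv ε) ≫ (ρ_ (inv x)).hom) ▷ x := by
            simp
        _ = (η (𝟙_ C ⊗ x)).hom ≫ inv (𝟙_ C ⊗ x) ◁ (λ_ x).hom ≫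
              (dualChi inv ε η (𝟙_ C) x ≫ (inv x ◁ dualIota inv ε) ≫ (ρ_ (inv x)).hom) ▷ x := by
            rw [mate]; simp
        _ = (η (𝟙_ C ⊗ x)).hom ≫
              (dualChi inv ε η (𝟙_ C) x ≫ (inv x ◁ dualIota inv ε) ≫ (ρ_ (inv x)).hom) ▷
                (𝟙_ C ⊗ x) ≫ inv x ◁ (λ_ x).hom := by rw [whisker_exchange]
        _ = ((η (𝟙_ C ⊗ x)).hom ≫ dualChi inv ε η (𝟙_ C) x ▷ (𝟙_ C ⊗ x)) ≫
              ((inv x ◁ dualIota inv ε) ≫ (ρ_ (inv x)).hom) ▷ (𝟙_ C ⊗ x) ≫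
              inv x ◁ (λ_ x).hom := by simp only [comp_whiskerRight, Category.assoc]
        _ = DualAux.dualN inv η (𝟙_ C) x ≫
              ((inv x ◁ dualIota inv ε) ≫ (ρ_ (inv x)).hom) ▷ (𝟙_ C ⊗ x) ≫
              inv x ◁ (λ_ x).hom := by rw [chi_name]
        _ = 𝟙 _ ⊗≫ (η x).hom ⊗≫
              inv x ◁ (((η (𝟙_ C)).hom ≫ dualIota inv ε ▷ 𝟙_ C) ▷ x) ⊗≫
              𝟙 (inv x ⊗ x) := by dsimp only [DualAux.dualN]; monoidal
        _ = 𝟙 _ ⊗≫ (η x).hom ⊗≫ inv x ◁ ((λ_ (𝟙_ C)).inv ▷ x) ⊗≫ 𝟙 (inv x ⊗ x) := by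
            rw [iota_name]
        _ = (η x).hom := by monoidal
    rw [this]; simp
  · -- right unit axiom
    intro x
    refine DualAux.inj_general (η x).hom (ε x).hom (zag x) ?_
    have : (η x).hom ≫
        (dualMap inv ε η (ρ_ x).hom ≫ dualChi inv ε η x (𝟙_ C) ≫
          (dualIota inv ε ▷ inv x) ≫ (λ_ (inv x)).hom) ▷ x = (η x).hom := by
      calc (η x).hom ≫
          (dualMap inv ε η (ρ_ x).hom ≫ dualChi inv ε η x (𝟙_ C) ≫
            (dualIota inv ε ▷ inv x) ≫ (λ_ (inv x)).hom) ▷ x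
          = ((η x).hom ≫ dualMap inv ε η (ρ_ x).hom ▷ x) ≫
              (dualChi inv ε η x (𝟙_ C) ≫ (dualIota inv ε ▷ inv x) ≫ (λ_ (inv x)).hom) ▷ x := by
            simp
        _ = (η (x ⊗ 𝟙_ C)).hom ≫ inv (x ⊗ 𝟙_ C) ◁ (ρ_ x).hom ≫
              (dualChi inv ε η x (𝟙_ C) ≫ (dualIota inv ε ▷ inv x) ≫ (λ_ (inv x)).hom) ▷ x := by
            rw [mate]; simp
        _ = (η (x ⊗ 𝟙_ C)).hom ≫
              (dualChi inv ε η x (𝟙_ C) ≫ (dualIota inv ε ▷ inv x) ≫ (λ_ (inv x)).hom) ▷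
                (x ⊗ 𝟙_ C) ≫ inv x ◁ (ρ_ x).hom := by rw [whisker_exchange]
        _ = ((η (x ⊗ 𝟙_ C)).hom ≫ dualChi inv ε η x (𝟙_ C) ▷ (x ⊗ 𝟙_ C)) ≫
              ((dualIota inv ε ▷ inv x) ≫ (λ_ (inv x)).hom) ▷ (x ⊗ 𝟙_ C) ≫
              inv x ◁ (ρ_ x).hom := by simp only [comp_whiskerRight, Category.assoc]
        _ = DualAux.dualN inv η x (𝟙_ C) ≫
              ((dualIota inv ε ▷ inv x) ≫ (λ_ (inv x)).hom) ▷ (x ⊗ 𝟙_ C) ≫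
              inv x ◁ (ρ_ x).hom := by rw [chi_name]
        _ = 𝟙 _ ⊗≫ (η (𝟙_ C)).hom ⊗≫
              (inv (𝟙_ C) ◁ ((η x).hom ▷ 𝟙_ C) ≫
                dualIota inv ε ▷ ((inv x ⊗ x) ⊗ 𝟙_ C)) ⊗≫ 𝟙 (inv x ⊗ x) := by
            dsimp only [DualAux.dualN]; monoidal
        _ = 𝟙 _ ⊗≫ (η (𝟙_ C)).hom ⊗≫
              (dualIota inv ε ▷ (𝟙_ C ⊗ 𝟙_ C) ≫ 𝟙_ C ◁ ((η x).hom ▷ 𝟙_ C)) ⊗≫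
              𝟙 (inv x ⊗ x) := by rw [whisker_exchange]
        _ = 𝟙 _ ⊗≫ ((η (𝟙_ C)).hom ≫ dualIota inv ε ▷ 𝟙_ C) ⊗≫
              (η x).hom ▷ 𝟙_ C ⊗≫ 𝟙 (inv x ⊗ x) := by monoidal
        _ = 𝟙 _ ⊗≫ (λ_ (𝟙_ C)).inv ⊗≫ (η x).hom ▷ 𝟙_ C ⊗≫ 𝟙 (inv x ⊗ x) := by
            rw [iota_name]
        _ = (η x).hom := by monoidal
    rw [this]; simp
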